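/- Let γ¹, γ² : (−∞,0) → ℝ be nonzero C² solutions of −γ'' + q(u)γ = 0 where q(u) = (r²/T²)l(l+1) ≥ 0 (and q not identically 0 when l ≥ 1). Suppose γ²(u) → 0 as u → 0⁻ while γ¹ tends to a finite limit (possibly 0) as u → −∞. If γ¹ and γ² were linearly dependent then both would be bounded convex/concave solutions vanishing appropriately at both ends, forcing γ ≡ 0, a contradiction. Hence γ¹, γ² are linearly independent and their Wronskian w(γ¹,γ²) = γ¹(γ²)' − (γ¹)'γ² is a nonzero constant. -/

import Mathlib

open Real Set Filter

open Topology

section wronskian_helpers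

/-- chord inequality from convexity -/
lemma chord_ineq {γ : ℝ → ℝ} {a b x : ℝ} (h : ConvexOn ℝ (Icc a b) γ) (hab : a < b)
    (hx : x ∈ Icc a b) :
    γ x ≤ (b - x)/(b - a) * γ a + (x - a)/(b - a) * γ b := by
  have hba : (0:ℝ) < b - a := by linarith
  have ht : 0 ≤ (b - x)/(b - a) := div_nonneg (by linarith [hx.2]) hba.le
  have hs : 0 ≤ (x - a)/(b - a) := div_nonneg (by linarith [hx.1]) hba.le
  have hts : (b - x)/(b - a) + (x - a)/(b - a) = 1 := by field_simp; ring
  have := h.2 (left_mem_Icc.2 hab.le) (right_mem_Icc.2 hab.le) ht hs hts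
  simp only [smul_eq_mul] at this
  have hxe : (b - x)/(b - a) * a + (x - a)/(b - a) * b = x := by
    rw [div_mul_eq_mul_div, div_mul_eq_mul_div, ← add_div, div_eq_iff hba.ne']
    ring
  rwa [hxe] at this

section
variable {q γ : ℝ → ℝ}

lemma conv_on (hq_pos : ∀ u ∈ Iio (0:ℝ), 0 ≤ q u)
    (hsm : ContDiffOn ℝ 2 γ (Iio 0))
    (hode : ∀ u ∈ Iio (0:ℝ), deriv (deriv γ) u = q u * γ u)
    {a b : ℝ} (hb : b < 0) (hnn : ∀ u ∈ Icc a b, 0 ≤ γ u) :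
    ConvexOn ℝ (Icc a b) γ := by
  have hsub : Icc a b ⊆ Iio 0 := fun u hu => lt_of_le_of_lt hu.2 hb
  have hsub' : interior (Icc a b) ⊆ Iio 0 := interior_subset.trans hsub
  refine convexOn_of_deriv2_nonneg (convex_Icc a b) (hsm.continuousOn.mono hsub)
    ((hsm.differentiableOn two_ne_zero).mono hsub')
    (((hsm.deriv_of_isOpen (m := 1) isOpen_Iio (by norm_num)).differentiableOn one_ne_zero).mono hsub')
    (fun x hx => ?_)
  have hx' : x ∈ Iio (0:ℝ) := hsub' hx
  have : deriv^[2] γ x = deriv (deriv γ) x := by simp [Function.iterate_succ]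
  rw [this, hode x hx']
  exact mul_nonneg (hq_pos x hx') (hnn x (interior_subset hx))

/-- Core: a solution tending to 0 at 0⁻ with finite limit at -∞ is ≤ 0. -/
lemma key (hq_pos : ∀ u ∈ Iio (0:ℝ), 0 ≤ q u)
    (hsm : ContDiffOn ℝ 2 γ (Iio 0))
    (hode : ∀ u ∈ Iio (0:ℝ), deriv (deriv γ) u = q u * γ u)
    (hbc0 : Tendsto γ (nhdsWithin 0 (Iio 0)) (nhds 0))
    (hbc : ∃ L : ℝ, Tendsto γ atBot (nhds L)) :
    ∀ u ∈ Iio (0:ℝ), γ u ≤ 0 := by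
  obtain ⟨L, hL⟩ := hbc
  by_contra hcon
  push_neg at hcon
  obtain ⟨u0, hu0, hpos⟩ := hcon
  have hcont : ∀ x ∈ Iio (0:ℝ), ContinuousAt γ x := fun x hx =>
    (hsm.continuousOn.continuousAt (Iio_mem_nhds hx))
  -- right endpoint β
  set T : Set ℝ := insert (0:ℝ) {u | u ∈ Ico u0 0 ∧ γ u ≤ 0} with hT
  have hTne : T.Nonempty := ⟨0, mem_insert _ _⟩
  have hTbdd : BddBelow T := ⟨u0, by
    rintro x (rfl | ⟨hx, _⟩)
    · exact hu0.le
    · exact hx.1⟩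
  set β := sInf T with hβ
  have hβle : β ≤ 0 := csInf_le hTbdd (mem_insert _ _)
  have hβgt : u0 < β := by
    obtain ⟨ε, hε, hball⟩ := Metric.mem_nhds_iff.1 ((hcont u0 hu0) (Ioi_mem_nhds hpos))
    have hu0neg : u0 < 0 := hu0
    set ε' := min ε (-u0) with hε'
    have hε'pos : 0 < ε' := lt_min hε (by linarith)
    have : u0 + ε'/2 ≤ β := by
      apply le_csInf hTne
      rintro x (rfl | ⟨hx, hx2⟩)
      · have : ε' ≤ -u0 := min_le_right _ _
        linarith
      · by_contra hlt
        push_neg at hlt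
        have : x ∈ Metric.ball u0 ε := by
          rw [Metric.mem_ball, Real.dist_eq, abs_lt]
          constructor <;> [linarith [hx.1]; skip]
          have : ε' ≤ ε := min_le_left _ _
          linarith
        exact absurd (hball this) (by simpa using hx2.not_gt)
    linarith
  have hβlt0 : β < 0 ∨ β = 0 := lt_or_eq_of_le hβle
  have hC1 : ∀ u ∈ Ico u0 β, 0 < γ u := by
    intro u hu
    by_contra hle
    push_neg at hle
    have : u ∈ T := Or.inr ⟨⟨hu.1, lt_of_lt_of_le hu.2 hβle⟩, hle⟩
    exact absurd (csInf_le hTbdd this) (not_le.2 hu.2)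
  have hC2 : Tendsto γ (nhdsWithin β (Iio β)) (nhds 0) := by
    rcases hβlt0 with hβneg | hβ0
    · -- show γ β = 0 and use continuity
      have hββ : β ∈ Iio (0:ℝ) := hβneg
      have hcontβ := hcont β hββ
      have hge : 0 ≤ γ β := by
        have htend : Tendsto γ (nhdsWithin β (Iio β)) (nhds (γ β)) :=
          hcontβ.continuousWithinAt.tendsto
        refine ge_of_tendsto htend ?_
        filter_upwards [Ioo_mem_nhdsLT_of_mem (⟨hβgt, le_rfl⟩ : β ∈ Ioc u0 β)] with x hx
        exact (hC1 x ⟨hx.1.le, hx.2⟩).le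
      have hle : γ β ≤ 0 := by
        by_contra hgt
        push_neg at hgt
        obtain ⟨ε, hε, hball⟩ := Metric.mem_nhds_iff.1 (hcontβ (Ioi_mem_nhds hgt))
        set ε' := min ε (-β) with hε'
        have hε'pos : 0 < ε' := lt_min hε (by linarith)
        have : β + ε'/2 ≤ β := by
          apply le_csInf hTne
          rintro x (rfl | ⟨hx, hx2⟩)
          · have : ε' ≤ -β := min_le_right _ _
            linarith
          · by_contra hlt
            push_neg at hlt
            have hxβ : β ≤ x := csInf_le hTbdd (Or.inr ⟨hx, hx2⟩)
            have : x ∈ Metric.ball β ε := by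
              rw [Metric.mem_ball, Real.dist_eq, abs_lt]
              have : ε' ≤ ε := min_le_left _ _
              constructor <;> linarith
            exact absurd (hball this) (by simpa using hx2.not_gt)
        linarith
      have : γ β = 0 := le_antisymm hle hge
      exact this ▸ hcontβ.continuousWithinAt.tendsto
    · rw [hβ0]; exact hbc0
  -- left side
  set S : Set ℝ := {u | u ≤ u0 ∧ γ u ≤ 0} with hS
  -- In either case we will derive: ∀ b' ∈ Ioo u0 β, γ u0 ≤ γ b'
  have hmain : ∀ b' ∈ Ioo u0 β, γ u0 ≤ γ b' := by
    intro b' hb'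
    have hb'neg : b' < 0 := lt_of_lt_of_le hb'.2 hβle
    by_cases hSne : S.Nonempty
    · -- finite left endpoint α with γ α = 0
      set α := sSup S with hα
      have hSbdd : BddAbove S := ⟨u0, fun x hx => hx.1⟩
      have hαle : α ≤ u0 := csSup_le hSne (fun x hx => hx.1)
      have hαlt : α < u0 := by
        obtain ⟨ε, hε, hball⟩ := Metric.mem_nhds_iff.1 ((hcont u0 hu0) (Ioi_mem_nhds hpos))
        have : α ≤ u0 - ε/2 := by
          apply csSup_le hSne
          rintro x ⟨hx1, hx2⟩
          by_contra hlt
          push_neg at hlt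
          have : x ∈ Metric.ball u0 ε := by
            rw [Metric.mem_ball, Real.dist_eq, abs_lt]
            constructor <;> linarith
          exact absurd (hball this) (by simpa using hx2.not_gt)
        linarith
      have hαneg : α < 0 := lt_of_lt_of_le hαlt hu0.le
      have hD1 : ∀ u ∈ Ioc α u0, 0 < γ u := by
        intro u hu
        by_contra hle
        push_neg at hle
        exact absurd (le_csSup hSbdd ⟨hu.2, hle⟩) (not_le.2 hu.1)
      have hcontα := hcont α hαneg
      have hαge : 0 ≤ γ α := by
        have htend : Tendsto γ (nhdsWithin α (Ioi α)) (nhds (γ α)) :=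
          hcontα.continuousWithinAt.tendsto
        refine ge_of_tendsto htend ?_
        filter_upwards [Ioo_mem_nhdsGT_of_mem (⟨le_rfl, hαlt⟩ : α ∈ Ico α u0)] with x hx
        exact (hD1 x ⟨hx.1, hx.2.le⟩).le
      have hαle0 : γ α ≤ 0 := by
        by_contra hgt
        push_neg at hgt
        obtain ⟨ε, hε, hball⟩ := Metric.mem_nhds_iff.1 (hcontα (Ioi_mem_nhds hgt))
        have : α - ε/2 ∈ upperBounds S := by
          rintro x ⟨hx1, hx2⟩
          by_contra hlt
          push_neg at hlt
          have hxα : x ≤ α := le_csSup hSbdd ⟨hx1, hx2⟩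
          have : x ∈ Metric.ball α ε := by
            rw [Metric.mem_ball, Real.dist_eq, abs_lt]
            constructor <;> linarith
          exact absurd (hball this) (by simpa using hx2.not_gt)
        have := csSup_le hSne this
        linarith
      have hα0 : γ α = 0 := le_antisymm hαle0 hαge
      -- convexity on [α, b']
      have hnn : ∀ u ∈ Icc α b', 0 ≤ γ u := by
        intro u hu
        rcases eq_or_lt_of_le hu.1 with rfl | hlt
        · exact hαge
        · rcases le_or_gt u u0 with h | h
          · exact (hD1 u ⟨hlt, h⟩).le
          · exact (hC1 u ⟨h.le, lt_of_le_of_lt hu.2 hb'.2⟩).le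
      have hconv := conv_on hq_pos hsm hode hb'neg hnn
      have := chord_ineq hconv (lt_trans hαlt hb'.1) ⟨hαlt.le, hb'.1.le⟩
      rw [hα0] at this
      have hcoef : 0 ≤ (u0 - α)/(b' - α) ∧ (u0 - α)/(b' - α) ≤ 1 := by
        constructor
        · apply div_nonneg <;> linarith [hαlt, hb'.1]
        · rw [div_le_one (by linarith [hb'.1])]
          linarith [hb'.1]
      have hb'pos : 0 < γ b' := hC1 b' ⟨hb'.1.le, hb'.2⟩
      calc γ u0 ≤ (b' - u0)/(b' - α) * 0 + (u0 - α)/(b' - α) * γ b' := this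
        _ = (u0 - α)/(b' - α) * γ b' := by ring
        _ ≤ 1 * γ b' := by
            apply mul_le_mul_of_nonneg_right hcoef.2 hb'pos.le
        _ = γ b' := one_mul _
    · -- S empty: γ > 0 on all of Iio β; monotonicity
      have hposall : ∀ u, u < β → 0 < γ u := by
        intro u hu
        rcases le_or_gt u u0 with h | h
        · by_contra hle
          push_neg at hle
          exact hSne ⟨u, h, hle⟩
        · exact hC1 u ⟨h.le, hu⟩
      -- monotone: γ u0 ≤ γ b'
      by_contra hgt
      push_neg at hgt
      -- for w → -∞ : chord on [w, b']
      have hineq : ∀ w, w < u0 - 1 →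
          γ u0 ≤ (b' - u0)/(b' - w) * γ w + (u0 - w)/(b' - w) * γ b' := by
        intro w hw
        have hwb : w < b' := by linarith [hb'.1]
        have hnn : ∀ u ∈ Icc w b', 0 ≤ γ u :=
          fun u hu => (hposall u (lt_of_le_of_lt hu.2 hb'.2)).le
        exact chord_ineq (conv_on hq_pos hsm hode hb'neg hnn) hwb ⟨by linarith, hb'.1.le⟩
      -- limits as w → -∞
      have hbw : Tendsto (fun w : ℝ => b' - w) atBot atTop := by
        simpa [sub_eq_add_neg] using
          tendsto_atTop_add_const_left atBot b' (tendsto_neg_atBot_atTop)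
      have ht1 : Tendsto (fun w => (b' - u0)/(b' - w) * γ w) atBot (nhds 0) := by
        have h2 : Tendsto (fun w => (b' - u0)/(b' - w)) atBot (nhds 0) :=
          Tendsto.const_div_atTop hbw _
        simpa using h2.mul hL
      have ht2 : Tendsto (fun w => (u0 - w)/(b' - w) * γ b') atBot (nhds (γ b')) := by
        have h2 : Tendsto (fun w => (u0 - b')/(b' - w)) atBot (nhds 0) :=
          Tendsto.const_div_atTop hbw _
        have h1 : Tendsto (fun w => (u0 - w)/(b' - w)) atBot (nhds 1) := by
          have heq : ∀ᶠ w in atBot, (u0 - w)/(b' - w) = 1 + (u0 - b')/(b' - w) := by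
            filter_upwards [eventually_lt_atBot b'] with w hw
            have hne : b' - w ≠ 0 := sub_ne_zero.2 (ne_of_gt (by linarith))
            field_simp
            ring
          rw [tendsto_congr' heq]
          simpa using tendsto_const_nhds.add h2
        simpa using h1.mul (tendsto_const_nhds (x := γ b'))
      have := ge_of_tendsto (ht1.add ht2) (by
        filter_upwards [eventually_lt_atBot (u0 - 1)] with w hw
        exact hineq w hw)
      rw [zero_add] at this
      exact absurd this (not_le.2 hgt)
  -- conclude: γ u0 ≤ 0
  have : γ u0 ≤ 0 := by
    refine ge_of_tendsto hC2 ?_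
    filter_upwards [Ioo_mem_nhdsLT_of_mem (⟨hβgt, le_rfl⟩ : β ∈ Ioc u0 β)] with x hx
    exact hmain x hx
  exact absurd this (not_le.2 hpos)


lemma zero_of_bc (hq_pos : ∀ u ∈ Iio (0:ℝ), 0 ≤ q u)
    (hsm : ContDiffOn ℝ 2 γ (Iio 0))
    (hode : ∀ u ∈ Iio (0:ℝ), deriv (deriv γ) u = q u * γ u)
    (hbc0 : Tendsto γ (nhdsWithin 0 (Iio 0)) (nhds 0))
    (hbc : ∃ L : ℝ, Tendsto γ atBot (nhds L)) :
    ∀ u ∈ Iio (0:ℝ), γ u = 0 := by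
  obtain ⟨L, hL⟩ := hbc
  have h1 := key hq_pos hsm hode hbc0 ⟨L, hL⟩
  have e1 : deriv (fun x => -γ x) = fun x => -deriv γ x := funext fun x => deriv.neg
  have h2 := key (γ := fun x => -γ x) hq_pos hsm.neg
    (fun u hu => by
      rw [e1]
      have : deriv (fun x => -deriv γ x) u = -deriv (deriv γ) u := deriv.neg
      rw [this, hode u hu]; ring)
    (by simpa using hbc0.neg) ⟨-L, hL.neg⟩
  intro u hu
  have := h2 u hu
  simp only [neg_nonpos] at this
  exact le_antisymm (h1 u hu) (by simpa using this)


end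
end wronskian_helpers

/-- For nonzero `C²` solutions `γ¹, γ²` of `-γ'' + qγ = 0` on
`(-∞,0)` with `q ≥ 0` continuous, where `γ² → 0` as `u → 0⁻` and `γ¹` has a
finite limit as `u → -∞`, the solutions are linearly independent and their
Wronskian is a nonzero constant. -/
theorem stmt_14 (q γ1 γ2 : ℝ → ℝ)
    (hq_cont : ContinuousOn q (Iio 0))
    (hq_pos : ∀ u ∈ Iio (0:ℝ), 0 ≤ q u)
    (hγ1_smooth : ContDiffOn ℝ 2 γ1 (Iio 0))
    (hγ2_smooth : ContDiffOn ℝ 2 γ2 (Iio 0))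
    (hγ1_ode : ∀ u ∈ Iio (0:ℝ), deriv (deriv γ1) u = q u * γ1 u)
    (hγ2_ode : ∀ u ∈ Iio (0:ℝ), deriv (deriv γ2) u = q u * γ2 u)
    (hγ1_ne : ∃ u ∈ Iio (0:ℝ), γ1 u ≠ 0)
    (hγ2_ne : ∃ u ∈ Iio (0:ℝ), γ2 u ≠ 0)
    (hγ2_bc : Tendsto γ2 (nhdsWithin 0 (Iio 0)) (nhds 0))
    (hγ1_bc : ∃ L : ℝ, Tendsto γ1 atBot (nhds L)) :
    (∀ a b : ℝ, (∀ u ∈ Iio (0:ℝ), a * γ1 u + b * γ2 u = 0) → a = 0 ∧ b = 0) ∧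
    ∃ w : ℝ, w ≠ 0 ∧
      ∀ u ∈ Iio (0:ℝ), γ1 u * deriv γ2 u - deriv γ1 u * γ2 u = w := by
  -- basic differentiability facts
  have hd1 : ∀ x ∈ Iio (0:ℝ), HasDerivAt γ1 (deriv γ1 x) x := fun x hx =>
    ((hγ1_smooth.differentiableOn two_ne_zero x hx).differentiableAt (Iio_mem_nhds hx)).hasDerivAt
  have hd2 : ∀ x ∈ Iio (0:ℝ), HasDerivAt γ2 (deriv γ2 x) x := fun x hx =>
    ((hγ2_smooth.differentiableOn two_ne_zero x hx).differentiableAt (Iio_mem_nhds hx)).hasDerivAt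
  have hd1' : ∀ x ∈ Iio (0:ℝ), HasDerivAt (deriv γ1) (deriv (deriv γ1) x) x := fun x hx =>
    ((((hγ1_smooth.deriv_of_isOpen (m := 1) isOpen_Iio (by norm_num)).differentiableOn one_ne_zero)
      x hx).differentiableAt (Iio_mem_nhds hx)).hasDerivAt
  have hd2' : ∀ x ∈ Iio (0:ℝ), HasDerivAt (deriv γ2) (deriv (deriv γ2) x) x := fun x hx =>
    ((((hγ2_smooth.deriv_of_isOpen (m := 1) isOpen_Iio (by norm_num)).differentiableOn one_ne_zero)
      x hx).differentiableAt (Iio_mem_nhds hx)).hasDerivAt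
  have hc1' : ContinuousOn (deriv γ1) (Iio 0) :=
    (hγ1_smooth.deriv_of_isOpen (m := 1) isOpen_Iio (by norm_num)).continuousOn
  have hc2' : ContinuousOn (deriv γ2) (Iio 0) :=
    (hγ2_smooth.deriv_of_isOpen (m := 1) isOpen_Iio (by norm_num)).continuousOn
  -- Part 1: linear independence
  have indep : ∀ a b : ℝ, (∀ u ∈ Iio (0:ℝ), a * γ1 u + b * γ2 u = 0) → a = 0 ∧ b = 0 := by
    intro a b hab
    have ha : a = 0 := by
      by_contra ha
      have heq : ∀ u ∈ Iio (0:ℝ), γ1 u = (-b/a) * γ2 u := by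
        intro u hu
        have := hab u hu
        field_simp
        linarith [hab u hu]
      have hbc0 : Tendsto γ1 (nhdsWithin 0 (Iio 0)) (nhds 0) := by
        have : Tendsto (fun u => (-b/a) * γ2 u) (nhdsWithin 0 (Iio 0)) (nhds 0) := by
          simpa using hγ2_bc.const_mul (-b/a)
        refine this.congr' ?_
        filter_upwards [self_mem_nhdsWithin] with u hu
        exact (heq u hu).symm
      obtain ⟨u, hu, hne⟩ := hγ1_ne
      exact hne (zero_of_bc hq_pos hγ1_smooth hγ1_ode hbc0 hγ1_bc u hu)
    refine ⟨ha, ?_⟩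
    by_contra hb
    obtain ⟨u, hu, hne⟩ := hγ2_ne
    have := hab u hu
    rw [ha] at this
    simp at this
    rcases this with h | h
    exacts [hb h, hne h]
  refine ⟨indep, ?_⟩
  -- Wronskian is constant
  set W : ℝ → ℝ := fun u => γ1 u * deriv γ2 u - deriv γ1 u * γ2 u with hW
  have hWd : ∀ x ∈ Iio (0:ℝ), HasDerivAt W 0 x := by
    intro x hx
    have h := (((hd1 x hx).mul (hd2' x hx)).sub ((hd1' x hx).mul (hd2 x hx)))
    refine h.congr_deriv ?_
    rw [hγ1_ode x hx, hγ2_ode x hx]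
    ring
  have hWconst : ∀ u ∈ Iio (0:ℝ), ∀ v ∈ Iio (0:ℝ), W u = W v := by
    intro u hu v hv
    refine (convex_Iio (0:ℝ)).is_const_of_fderivWithin_eq_zero (𝕜 := ℝ)
      (fun x hx => ((hWd x hx).differentiableAt).differentiableWithinAt) ?_ hu hv
    intro x hx
    rw [fderivWithin_of_isOpen isOpen_Iio hx]
    have : HasFDerivAt W (0 : ℝ →L[ℝ] ℝ) x := by
      have h := (hWd x hx).hasFDerivAt
      refine h.congr_fderiv ?_
      refine ContinuousLinearMap.ext fun p => ?_
      simp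
    exact this.fderiv
  obtain ⟨u2, hu2, hne2⟩ := hγ2_ne
  refine ⟨W u2, ?_, fun u hu => hWconst u hu u2 hu2⟩
  -- W u2 ≠ 0
  intro hw0
  set c := γ1 u2 / γ2 u2 with hc
  -- uniqueness: γ1 = c γ2 on [u2, 0)
  have huniq : ∀ t ∈ Ico u2 (0:ℝ), γ1 t = c * γ2 t := by
    intro t ht
    set b := max t u2 with hb
    have hbneg : b < 0 := max_lt ht.2 hu2
    have hu2b : u2 ≤ b := le_max_right _ _
    have hsub : Icc u2 b ⊆ Iio (0:ℝ) := fun x hx => lt_of_le_of_lt hx.2 hbneg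
    -- bound for q on the interval
    obtain ⟨C, hC⟩ := (isCompact_Icc (a := u2) (b := b)).exists_bound_of_continuousOn
      (hq_cont.mono hsub)
    set K : NNReal := Real.toNNReal (max 1 C) with hK
    have hKcoe : (K : ℝ) = max 1 C := Real.coe_toNNReal _ (le_trans zero_le_one (le_max_left _ _))
    set qc : ℝ → ℝ := fun s => q (max u2 (min s b)) with hqc
    have hqc_mem : ∀ s : ℝ, max u2 (min s b) ∈ Icc u2 b := fun s =>
      ⟨le_max_left _ _, max_le hu2b (min_le_right _ _)⟩
    have hqc_eq : ∀ s ∈ Icc u2 b, qc s = q s := by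
      intro s hs
      rw [hqc]
      simp only
      rw [min_eq_left hs.2, max_eq_right hs.1]
    have hqc_bd : ∀ s : ℝ, |qc s| ≤ max 1 C := by
      intro s
      have := hC _ (hqc_mem s)
      rw [Real.norm_eq_abs] at this
      exact this.trans (le_max_right 1 C)
    set v : ℝ → ℝ × ℝ → ℝ × ℝ := fun s p => (p.2, qc s * p.1) with hv
    have hlip : ∀ s, LipschitzWith K (v s) := by
      intro s
      apply LipschitzWith.of_dist_le_mul
      intro p p'
      rw [Prod.dist_eq, Prod.dist_eq]
      simp only [hv, Real.dist_eq]
      rw [hKcoe]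
      have h1 : |p.2 - p'.2| ≤ max 1 C * max |p.1 - p'.1| |p.2 - p'.2| := by
        calc |p.2 - p'.2| ≤ max |p.1 - p'.1| |p.2 - p'.2| := le_max_right _ _
          _ = 1 * max |p.1 - p'.1| |p.2 - p'.2| := (one_mul _).symm
          _ ≤ max 1 C * max |p.1 - p'.1| |p.2 - p'.2| := by
              apply mul_le_mul_of_nonneg_right (le_max_left _ _)
              positivity
      have h2 : |qc s * p.1 - qc s * p'.1| ≤ max 1 C * max |p.1 - p'.1| |p.2 - p'.2| := by
        rw [← mul_sub, abs_mul]
        calc |qc s| * |p.1 - p'.1| ≤ max 1 C * |p.1 - p'.1| :=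
              mul_le_mul_of_nonneg_right (hqc_bd s) (abs_nonneg _)
          _ ≤ max 1 C * max |p.1 - p'.1| |p.2 - p'.2| := by
              apply mul_le_mul_of_nonneg_left (le_max_left _ _)
              positivity
      exact max_le h1 h2
    set f : ℝ → ℝ × ℝ := fun s => (γ1 s, deriv γ1 s) with hf
    set g : ℝ → ℝ × ℝ := fun s => (c * γ2 s, c * deriv γ2 s) with hg
    have hfd : ∀ s ∈ Ico u2 b, HasDerivWithinAt f (v s (f s)) (Ici s) s := by
      intro s hs
      have hs' : s ∈ Iio (0:ℝ) := lt_of_lt_of_le hs.2 hbneg.le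
      have := (hd1 s hs').prodMk (hd1' s hs')
      rw [hγ1_ode s hs'] at this
      have hveq : v s (f s) = (deriv γ1 s, q s * γ1 s) := by
        simp only [hv, hf, hqc_eq s ⟨hs.1, hs.2.le⟩]
      rw [hveq]
      exact this.hasDerivWithinAt
    have hgd : ∀ s ∈ Ico u2 b, HasDerivWithinAt g (v s (g s)) (Ici s) s := by
      intro s hs
      have hs' : s ∈ Iio (0:ℝ) := lt_of_lt_of_le hs.2 hbneg.le
      have h2 := ((hd2 s hs').const_mul c).prodMk (((hd2' s hs').const_mul c))
      rw [hγ2_ode s hs'] at h2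
      have hveq : v s (g s) = (c * deriv γ2 s, c * (q s * γ2 s)) := by
        simp only [hv, hg, hqc_eq s ⟨hs.1, hs.2.le⟩]
        ring_nf
      rw [hveq]
      exact h2.hasDerivWithinAt
    have hfc : ContinuousOn f (Icc u2 b) := by
      apply ContinuousOn.prodMk
      · exact (hγ1_smooth.continuousOn.mono (hsub.trans (subset_refl _)))
      · exact hc1'.mono hsub
    have hgc : ContinuousOn g (Icc u2 b) := by
      apply ContinuousOn.prodMk
      · exact (continuousOn_const.mul (hγ2_smooth.continuousOn.mono hsub))
      · exact (continuousOn_const.mul (hc2'.mono hsub))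
    have hinit : f u2 = g u2 := by
      have hW0 : γ1 u2 * deriv γ2 u2 - deriv γ1 u2 * γ2 u2 = 0 := hw0
      have e1 : γ1 u2 = c * γ2 u2 := by
        rw [hc]; field_simp
      have e2 : deriv γ1 u2 = c * deriv γ2 u2 := by
        rw [hc]
        field_simp
        linarith [hW0]
      simp only [hf, hg, e1, e2]
    have := ODE_solution_unique hlip hfc hfd hgc hgd hinit
    have hteq := this ⟨ht.1, le_max_left t u2⟩
    have hfst := congrArg Prod.fst hteq
    simpa only [hf, hg] using hfst
  -- γ1 tends to 0 at 0⁻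
  have hbc0 : Tendsto γ1 (nhdsWithin 0 (Iio 0)) (nhds 0) := by
    have : Tendsto (fun u => c * γ2 u) (nhdsWithin 0 (Iio 0)) (nhds 0) := by
      simpa using hγ2_bc.const_mul c
    refine this.congr' ?_
    filter_upwards [Ioo_mem_nhdsLT_of_mem (⟨hu2, le_rfl⟩ : (0:ℝ) ∈ Ioc u2 0)] with u hu
    exact (huniq u ⟨hu.1.le, hu.2⟩).symm
  obtain ⟨u1, hu1, hne1⟩ := hγ1_ne
  exact hne1 (zero_of_bc hq_pos hγ1_smooth hγ1_ode hbc0 hγ1_bc u1 hu1)
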